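/- Let $y, z : [x_0, \infty) \to (0, \infty)$ be $C^2$ functions with $y'(x) \to 0$ as $x \to \infty$ and $z$ bounded, satisfying $y''(x) = \phi(x) y(x)$ and $z''(x) = \psi(x) z(x)$ for continuous functions $\phi \le \psi$, with $y(x_0) = z(x_0)$. Then $z(x) \le y(x)$ for all $x \ge x_0$. -/

import Mathlib

open MeasureTheory Real Filter Asymptotics

noncomputable def FT (f : ℝ → ℂ) (ξ : ℝ) : ℂ :=
  (((2 * Real.pi) ^ (-(1:ℝ)/2) : ℝ) : ℂ) * ∫ x : ℝ, f x * Complex.exp (-(Complex.I * ξ * x))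

noncomputable def hermiteFn (n : ℕ) (x : ℝ) : ℝ :=
  ((2 ^ n * n.factorial * Real.sqrt Real.pi : ℝ) ^ (-(1:ℝ)/2)) *
    ((-1 : ℝ) ^ n * Real.exp (x ^ 2) * iteratedDeriv n (fun t => Real.exp (-t ^ 2)) x) *
    Real.exp (-x ^ 2 / 2)

def IsWeight (ω : ℝ → ℝ) : Prop :=
  Continuous ω ∧ Monotone ω ∧ (∀ x, 0 ≤ ω x) ∧
  ConvexOn ℝ Set.univ (fun t => ω (Real.exp t)) ∧
  ((fun t => Real.log t) =o[atTop] ω) ∧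
  (∃ C : ℝ, ∀ᶠ t in atTop, ω (2 * t) ≤ C * ω t) ∧
  Filter.limsup (fun t => ω t / t ^ 2) atTop ≤ 1 / 2

noncomputable def omegaNorm (ω : ℝ → ℝ) (f : ℝ → ℂ) : ℝ :=
  (⨆ x : ℝ, ‖f x‖ * Real.exp (ω |x|)) + (⨆ ξ : ℝ, ‖FT f ξ‖ * Real.exp (ω |ξ|))

def MemSomega (ω : ℝ → ℝ) (f : ℝ → ℂ) : Prop :=
  MemLp f 2 volume ∧
  (∃ C : ℝ, ∀ x, ‖f x‖ ≤ C * Real.exp (-ω |x|)) ∧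
  (∃ C : ℝ, ∀ ξ, ‖FT f ξ‖ ≤ C * Real.exp (-ω |ξ|))

noncomputable def OmegaStar (ω : ℝ → ℝ) (ν : ℝ) : ℝ :=
  ⨆ t : ℝ, ν * t - ω (Real.exp t)

noncomputable def wigner (f : ℝ → ℂ) (q p : ℝ) : ℂ :=
  ((1 / (2 * Real.pi) : ℝ) : ℂ) * ∫ x : ℝ,
    Complex.exp (Complex.I * p * x) * f (q - x / 2) * (starRingEnd ℂ) (f (q + x / 2))

noncomputable def laguerre (n α : ℕ) (x : ℝ) : ℝ :=
  (n.factorial : ℝ)⁻¹ * Real.exp x * x ^ (-(α : ℤ)) *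
    iteratedDeriv n (fun t => Real.exp (-t) * t ^ (n + α)) x

noncomputable def specialHermite (m n : ℕ) (q p : ℝ) : ℂ :=
  ((1 / (2 * Real.pi) : ℝ) : ℂ) * ∫ x : ℝ,
    Complex.exp (Complex.I * p * x) * (hermiteFn m (q - x / 2) : ℂ) * (hermiteFn n (q + x / 2) : ℂ)

noncomputable def lmn (m n : ℕ) (r : ℝ) : ℝ :=
  (2 : ℝ) ^ (((m : ℝ) - n) / 2) / Real.pi * Real.sqrt ((n.factorial : ℝ) / m.factorial) *
    Real.exp (-r ^ 2) * r ^ (m - n) * |laguerre n (m - n) (2 * r ^ 2)|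

theorem stmt0 (x0 : ℝ) (y z φ ψ : ℝ → ℝ)
    (hy : ContDiffOn ℝ 2 y (Set.Ici x0)) (hz : ContDiffOn ℝ 2 z (Set.Ici x0))
    (hypos : ∀ x ≥ x0, 0 < y x) (hzpos : ∀ x ≥ x0, 0 < z x)
    (hyd : Filter.Tendsto (deriv y) Filter.atTop (nhds 0))
    (hzbdd : ∃ M : ℝ, ∀ x ≥ x0, z x ≤ M)
    (hφ : ContinuousOn φ (Set.Ici x0)) (hψ : ContinuousOn ψ (Set.Ici x0))
    (hle : ∀ x ≥ x0, φ x ≤ ψ x)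
    (hyode : ∀ x ≥ x0, deriv (deriv y) x = φ x * y x)
    (hzode : ∀ x ≥ x0, deriv (deriv z) x = ψ x * z x)
    (hinit : y x0 = z x0) :
    ∀ x ≥ x0, z x ≤ y x := by
  obtain ⟨M0, hM0⟩ := hzbdd
  set M : ℝ := max M0 1 with hMdef
  have hMpos : (0:ℝ) < M := lt_of_lt_of_le one_pos (le_max_right _ _)
  have hzM : ∀ x ≥ x0, z x ≤ M := fun x hx => (hM0 x hx).trans (le_max_left _ _)
  have hyo : ContDiffOn ℝ 2 y (Set.Ioi x0) := hy.mono Set.Ioi_subset_Ici_self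
  have hzo : ContDiffOn ℝ 2 z (Set.Ioi x0) := hz.mono Set.Ioi_subset_Ici_self
  have hyd1 : ContDiffOn ℝ 1 (deriv y) (Set.Ioi x0) :=
    hyo.deriv_of_isOpen isOpen_Ioi (by norm_num)
  have hzd1 : ContDiffOn ℝ 1 (deriv z) (Set.Ioi x0) :=
    hzo.deriv_of_isOpen isOpen_Ioi (by norm_num)
  have hyD : ∀ x ∈ Set.Ioi x0, HasDerivAt y (deriv y x) x := fun x hx =>
    ((hyo.differentiableOn (by norm_num)).differentiableAt
      (isOpen_Ioi.mem_nhds hx)).hasDerivAt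
  have hzD : ∀ x ∈ Set.Ioi x0, HasDerivAt z (deriv z x) x := fun x hx =>
    ((hzo.differentiableOn (by norm_num)).differentiableAt
      (isOpen_Ioi.mem_nhds hx)).hasDerivAt
  have hyD2 : ∀ x ∈ Set.Ioi x0, HasDerivAt (deriv y) (deriv (deriv y) x) x := fun x hx =>
    ((hyd1.differentiableOn (by norm_num)).differentiableAt (isOpen_Ioi.mem_nhds hx)).hasDerivAt
  have hzD2 : ∀ x ∈ Set.Ioi x0, HasDerivAt (deriv z) (deriv (deriv z) x) x := fun x hx =>
    ((hzd1.differentiableOn (by norm_num)).differentiableAt (isOpen_Ioi.mem_nhds hx)).hasDerivAt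
  set W : ℝ → ℝ := fun t => deriv z t * y t - z t * deriv y t with hWdef
  have hWD : ∀ x ∈ Set.Ioi x0, HasDerivAt W ((ψ x - φ x) * (z x * y x)) x := by
    intro x hx
    have h := ((hzD2 x hx).mul (hyD x hx)).sub ((hzD x hx).mul (hyD2 x hx))
    have hrw : deriv (deriv z) x * y x + deriv z x * deriv y x -
        (deriv z x * deriv y x + z x * deriv (deriv y) x) = (ψ x - φ x) * (z x * y x) := by
      rw [hyode x (le_of_lt hx), hzode x (le_of_lt hx)]; ring
    exact hrw ▸ h
  have hWmono : MonotoneOn W (Set.Ioi x0) := by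
    apply monotoneOn_of_deriv_nonneg (convex_Ioi x0)
    · exact fun x hx => (hWD x hx).continuousAt.continuousWithinAt
    · rw [interior_Ioi]
      exact fun x hx => (hWD x hx).differentiableAt.differentiableWithinAt
    · rw [interior_Ioi]
      intro x hx
      rw [(hWD x hx).deriv]
      exact mul_nonneg (sub_nonneg.2 (hle x hx.le))
        (mul_nonneg (hzpos x hx.le).le (hypos x hx.le).le)
  have hWle : ∀ x ∈ Set.Ioi x0, deriv z x * y x - z x * deriv y x ≤ 0 := by
    by_contra hcon
    push_neg at hcon
    obtain ⟨x1, hx1, hWx1⟩ := hcon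
    obtain ⟨δ, hδeq⟩ : ∃ d : ℝ, d = W x1 := ⟨_, rfl⟩
    have hδpos : 0 < δ := by rw [hδeq]; exact hWx1
    have hεpos : 0 < min 1 (δ / (2 * M)) := lt_min one_pos (by positivity)
    obtain ⟨X0, hX0⟩ := Metric.tendsto_atTop.mp hyd _ hεpos
    set X : ℝ := max X0 x1 with hXdef
    have hXx1 : x1 ≤ X := le_max_right _ _
    have hXx0 : x0 < X := lt_of_lt_of_le hx1 hXx1
    -- small derivative of y beyond X
    have hsmall : ∀ x ≥ X, |deriv y x| ≤ min 1 (δ / (2 * M)) := by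
      intro x hx
      have := hX0 x (le_trans (le_max_left _ _) hx)
      rw [Real.dist_eq, sub_zero] at this
      exact this.le
    -- key inequality: z' x * y x ≥ δ/2 for x ≥ X
    have hkey : ∀ x ≥ X, δ / 2 ≤ deriv z x * y x := by
      intro x hx
      have hxx0 : x0 < x := lt_of_lt_of_le hXx0 hx
      have hWge : deriv z x1 * y x1 - z x1 * deriv y x1 ≤
          deriv z x * y x - z x * deriv y x := hWmono hx1 hxx0 (le_trans hXx1 hx)
      have hWge' : δ ≤ deriv z x * y x - z x * deriv y x := by
        rw [hδeq]; exact hWge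
      have habs : |deriv y x| ≤ δ / (2 * M) := (hsmall x hx).trans (min_le_right _ _)
      have hd1 : -(δ / (2 * M)) ≤ deriv y x := (abs_le.mp habs).1
      have hz1 : 0 < z x := hzpos x hxx0.le
      have hz2 : z x ≤ M := hzM x hxx0.le
      have hq : 0 < δ / (2 * M) := by positivity
      have h4 : z x * (-(δ / (2 * M))) ≤ z x * deriv y x :=
        mul_le_mul_of_nonneg_left hd1 hz1.le
      have h5 : z x * (δ / (2 * M)) ≤ M * (δ / (2 * M)) :=
        mul_le_mul_of_nonneg_right hz2 hq.le
      have hprod : M * (δ / (2 * M)) = δ / 2 := by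
        field_simp
      have h3 : -(δ / 2) ≤ z x * deriv y x := by nlinarith
      linarith
    -- y grows at most linearly beyond X
    have hylin : ∀ x ≥ X, y x ≤ y X + (x - X) := by
      have hanti : AntitoneOn (fun t => y t - t) (Set.Ici X) := by
        apply antitoneOn_of_deriv_nonpos (convex_Ici X)
        · exact ((hy.continuousOn.mono (Set.Ici_subset_Ici.mpr hXx0.le)).sub
            continuousOn_id)
        · rw [interior_Ici]
          intro t ht
          have ht0 : t ∈ Set.Ioi x0 := lt_trans hXx0 ht
          have hD : HasDerivAt (fun s : ℝ => y s - s) (deriv y t - 1) t := by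
            exact (hyD t ht0).sub (hasDerivAt_id t)
          exact hD.differentiableAt.differentiableWithinAt
        · rw [interior_Ici]
          intro t ht
          have ht0 : t ∈ Set.Ioi x0 := lt_trans hXx0 ht
          have hD : HasDerivAt (fun s : ℝ => y s - s) (deriv y t - 1) t := by
            exact (hyD t ht0).sub (hasDerivAt_id t)
          rw [hD.deriv]
          have h1 := (hsmall t (le_of_lt ht)).trans (min_le_left _ _)
          have h2 := (abs_le.mp h1).2
          linarith
      intro x hx
      have := hanti Set.self_mem_Ici hx hx
      simp only at this
      linarith
    -- z grows at least logarithmically: contradiction with boundedness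
    have hyXpos : 0 < y X := hypos X hXx0.le
    set g : ℝ → ℝ := fun t => (δ / 2) * Real.log (y X + (t - X)) with hgdef
    have hargpos : ∀ t ≥ X, 0 < y X + (t - X) := fun t ht => by linarith
    have hgD : ∀ t ≥ X, HasDerivAt g (δ / 2 / (y X + (t - X))) t := by
      intro t ht
      have hinner : HasDerivAt (fun s : ℝ => y X + (s - X)) 1 t := by
        simpa using ((hasDerivAt_id t).sub_const X).const_add (y X)
      have hlog := (Real.hasDerivAt_log (hargpos t ht).ne').comp t hinner
      have := hlog.const_mul (δ / 2)
      simpa [div_eq_mul_inv, hgdef] using this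
    have hmono : MonotoneOn (fun t => z t - g t) (Set.Ici X) := by
      apply monotoneOn_of_deriv_nonneg (convex_Ici X)
      · exact (hz.continuousOn.mono (Set.Ici_subset_Ici.mpr hXx0.le)).sub
          (fun t ht => (hgD t ht).continuousAt.continuousWithinAt)
      · rw [interior_Ici]
        intro t ht
        have ht0 : t ∈ Set.Ioi x0 := lt_trans hXx0 ht
        exact ((hzD t ht0).sub (hgD t ht.le)).differentiableAt.differentiableWithinAt
      · rw [interior_Ici]
        intro t ht
        have ht0 : t ∈ Set.Ioi x0 := lt_trans hXx0 ht
        rw [HasDerivAt.deriv (f := fun t => z t - g t) ((hzD t ht0).sub (hgD t ht.le))]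
        have h1 : δ / 2 ≤ deriv z t * y t := hkey t ht.le
        have h2 : 0 < y t := hypos t ht0.le
        have h3 : y t ≤ y X + (t - X) := hylin t ht.le
        have h4 : 0 < y X + (t - X) := hargpos t ht.le
        have h5 : δ / 2 / y t ≤ deriv z t := by
          rw [div_le_iff₀ h2]; linarith
        have h6 : δ / 2 / (y X + (t - X)) ≤ δ / 2 / y t :=
          div_le_div_of_nonneg_left (by positivity) h2 h3
        linarith
    -- g tends to infinity
    have hgtop : Filter.Tendsto g Filter.atTop Filter.atTop := by
      apply Filter.Tendsto.const_mul_atTop (by positivity : (0:ℝ) < δ / 2)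
      apply Real.tendsto_log_atTop.comp
      apply Filter.tendsto_atTop_add_const_left
      convert Filter.tendsto_atTop_add_const_right Filter.atTop (-X) Filter.tendsto_id using 1
      funext x; simp only [id]; ring
    obtain ⟨t, ht⟩ := ((hgtop.eventually_gt_atTop (M - z X + g X)).and
      (Filter.eventually_ge_atTop X)).exists
    obtain ⟨hgt, htX⟩ := ht
    have h7 : z X - g X ≤ z t - g t := hmono Set.self_mem_Ici htX htX
    have h8 : z t ≤ M := hzM t (le_trans hXx0.le htX)
    linarith
  -- ratio z/y is nonincreasing
  have hrat : AntitoneOn (fun t => z t / y t) (Set.Ici x0) := by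
    apply antitoneOn_of_deriv_nonpos (convex_Ici x0)
    · exact hz.continuousOn.div hy.continuousOn (fun t ht => (hypos t ht).ne')
    · rw [interior_Ici]
      intro t ht
      exact ((hzD t ht).div (hyD t ht) (hypos t ht.le).ne').differentiableAt.differentiableWithinAt
    · rw [interior_Ici]
      intro t ht
      rw [HasDerivAt.deriv (f := fun t => z t / y t) ((hzD t ht).div (hyD t ht) (hypos t ht.le).ne')]
      exact div_nonpos_iff.mpr (Or.inr ⟨hWle t ht, sq_nonneg _⟩)
  intro x hx
  have h1 : z x / y x ≤ z x0 / y x0 := hrat Set.self_mem_Ici hx hx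
  have h2 : z x0 / y x0 = 1 := by
    rw [hinit]; exact div_self (hzpos x0 le_rfl).ne'
  rw [h2] at h1
  exact (div_le_one (hypos x hx)).mp h1
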